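/- arXiv:1406.0899 — 9 statements merged into one kernel-verified Lean document; each statement's English description precedes it below -/
import Mathlib

section
/- Let F : R^n → R be convex with bounded curvature constant μ_F on C = conv(D), where D is a finite set of points. Suppose points y, z ∈ C satisfy F(y) ≤ F(z) − ε for some ε > 0. Then for any γ ∈ (0, 1) and any step size β with 0 < β ≤ (1−γ)·min{ε/(μ_F · x̄_D²), 1}, where x̄_D = 2·max_{x ∈ D} ‖x‖₂, there exists x ∈ D such that F((1−β)z + βx) ≤ F(z) − γβε. -/
/-- Non-Convex Descent: if `F` is convex with bounded curvature constant `μF` on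
`C = conv(D)` and `F(y) ≤ F(z) - ε`, then for any `γ ∈ (0,1)` and step size
`0 < β ≤ (1-γ) min{ε/(μF x̄_D²), 1}` with `x̄_D = 2 max_{x∈D} ‖x‖`, there is `x ∈ D`
with `F((1-β)z + βx) ≤ F(z) - γβε`. -/
theorem nonconvex_descent {n : ℕ} (D : Set (EuclideanSpace ℝ (Fin n)))
    (hD : D.Finite) (hne : D.Nonempty)
    (F : EuclideanSpace ℝ (Fin n) → ℝ)
    (hF : ConvexOn ℝ Set.univ F)
    (sg : EuclideanSpace ℝ (Fin n) → EuclideanSpace ℝ (Fin n))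
    (hsg : ∀ w ∈ convexHull ℝ D, ∀ v, F w + ∑ j, sg w j * (v - w) j ≤ F v)
    (μF : ℝ) (hμF : 0 ≤ μF)
    (hcurv : ∀ w δ, w ∈ convexHull ℝ D → w + δ ∈ convexHull ℝ D →
      F (w + δ) - F w ≤ (∑ j, sg w j * δ j) + μF * ‖δ‖ ^ 2)
    (M : ℝ) (hM : IsGreatest ((fun x => ‖x‖) '' D) M)
    (y z : EuclideanSpace ℝ (Fin n))
    (hy : y ∈ convexHull ℝ D) (hz : z ∈ convexHull ℝ D)
    (ε : ℝ) (hε : 0 < ε) (hFyz : F y ≤ F z - ε)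
    (γ β : ℝ) (hγ : γ ∈ Set.Ioo (0:ℝ) 1)
    (hβ0 : 0 < β) (hβ : β ≤ (1 - γ) * min (ε / (μF * (2 * M) ^ 2)) 1) :
    ∃ x ∈ D, F ((1 - β) • z + β • x) ≤ F z - γ * β * ε := by
  obtain ⟨hγ0, hγ1⟩ := hγ
  obtain ⟨x0, hx0D⟩ := hne
  have hM0 : 0 ≤ M := le_trans (norm_nonneg x0) (hM.2 ⟨x0, hx0D, rfl⟩)
  set L : EuclideanSpace ℝ (Fin n) → ℝ := fun v => ∑ j, sg z j * (v - z) j with hLdef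
  obtain ⟨x, hxD, hxmin⟩ := Set.exists_min_image D L hD ⟨x0, hx0D⟩
  refine ⟨x, hxD, ?_⟩
  have hLy : L y ≤ -ε := by
    have h := hsg z hz y
    simp only [hLdef]
    linarith
  have hconv : Convex ℝ {v | L x ≤ L v} := by
    intro v hv w hw a b ha hb hab
    simp only [Set.mem_setOf_eq, hLdef] at hv hw ⊢
    have key : (∑ j, sg z j * ((a • v + b • w) - z) j)
        = a * (∑ j, sg z j * (v - z) j) + b * (∑ j, sg z j * (w - z) j) := by
      rw [Finset.mul_sum, Finset.mul_sum, ← Finset.sum_add_distrib]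
      refine Finset.sum_congr rfl fun j _ => ?_
      simp only [PiLp.add_apply, PiLp.sub_apply, PiLp.smul_apply, smul_eq_mul]
      linear_combination sg z j * z j * hab
    rw [key]
    have h1 := mul_le_mul_of_nonneg_left hv ha
    have h2 := mul_le_mul_of_nonneg_left hw hb
    have h3 : a * L x + b * L x = L x := by linear_combination (L x) * hab
    simp only [hLdef] at h3
    linarith
  have hLx : L x ≤ -ε := by
    have hsub : convexHull ℝ D ⊆ {v | L x ≤ L v} :=
      convexHull_min (fun v hv => hxmin v hv) hconv
    exact le_trans (hsub hy) hLy
  -- norm bounds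
  have hball : convexHull ℝ D ⊆ Metric.closedBall 0 M := by
    apply convexHull_min
    · intro v hv
      simpa [Metric.mem_closedBall] using hM.2 ⟨v, hv, rfl⟩
    · exact convex_closedBall 0 M
  have hznorm : ‖z‖ ≤ M := by simpa [Metric.mem_closedBall] using hball hz
  have hxnorm : ‖x‖ ≤ M := hM.2 ⟨x, hxD, rfl⟩
  have hxz : ‖x - z‖ ≤ 2 * M := by
    calc ‖x - z‖ ≤ ‖x‖ + ‖z‖ := norm_sub_le x z
    _ ≤ 2 * M := by linarith
  -- step size bounds
  have hβ1 : β ≤ 1 - γ := by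
    have h1 : min (ε / (μF * (2 * M) ^ 2)) 1 ≤ 1 := min_le_right _ _
    nlinarith
  have hβa : μF * (2 * M) ^ 2 * β ≤ (1 - γ) * ε := by
    rcases le_or_gt (μF * (2 * M) ^ 2) 0 with hc | hc
    · have : μF * (2*M)^2 * β ≤ 0 := mul_nonpos_of_nonpos_of_nonneg hc hβ0.le
      nlinarith
    · have h1 : β ≤ (1 - γ) * (ε / (μF * (2 * M) ^ 2)) := by
        have := min_le_left (ε / (μF * (2 * M) ^ 2)) 1
        nlinarith
      have h2 : (1 - γ) * (ε / (μF * (2 * M) ^ 2)) = ((1 - γ) * ε) / (μF * (2 * M) ^ 2) := by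
        ring
      rw [h2, le_div_iff₀ hc] at h1
      linarith
  -- membership of the new point
  have hxC : x ∈ convexHull ℝ D := subset_convexHull ℝ D hxD
  have hmem : (1 - β) • z + β • x ∈ convexHull ℝ D :=
    (convex_convexHull ℝ D) hz hxC (by linarith) hβ0.le (by ring)
  have heq : z + β • (x - z) = (1 - β) • z + β • x := by module
  have hmem' : z + β • (x - z) ∈ convexHull ℝ D := heq ▸ hmem
  have hc := hcurv z (β • (x - z)) hz hmem'
  rw [heq] at hc
  have hsum : (∑ j, sg z j * (β • (x - z)) j) = β * L x := by
    simp only [hLdef, Finset.mul_sum]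
    refine Finset.sum_congr rfl fun j _ => ?_
    simp only [PiLp.smul_apply, smul_eq_mul]
    ring
  have hnorm : ‖β • (x - z)‖ ^ 2 ≤ β ^ 2 * (2 * M) ^ 2 := by
    rw [norm_smul]
    rw [Real.norm_eq_abs, abs_of_pos hβ0, mul_pow]
    have h0 : 0 ≤ ‖x - z‖ := norm_nonneg _
    nlinarith [mul_le_mul hxz hxz h0 (by linarith : (0:ℝ) ≤ 2 * M), sq_nonneg β]
  have hLxβ : β * L x ≤ -(β * ε) := by nlinarith
  have hμterm : μF * ‖β • (x - z)‖ ^ 2 ≤ β * ((1 - γ) * ε) := by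
    calc μF * ‖β • (x - z)‖ ^ 2 ≤ μF * (β ^ 2 * (2 * M) ^ 2) :=
          mul_le_mul_of_nonneg_left hnorm hμF
    _ = β * (μF * (2 * M) ^ 2 * β) := by ring
    _ ≤ β * ((1 - γ) * ε) := mul_le_mul_of_nonneg_left hβa hβ0.le
  rw [hsum] at hc
  nlinarith
end

section
/- Consider the constrained convex problem min_{z ∈ C} f(z) subject to g(z) ⪯ 0, with dual function q(λ) = min_{z∈C} (f(z) + λᵀg(z)). Suppose a Slater vector z̄ ∈ C exists with g(z̄) ≺ 0. Then for every δ ≥ 0 and every λ ⪰ 0 with q(λ) ≥ q(λ*) − δ (where λ* is a dual maximizer), ‖λ‖₂ ≤ (f(z̄) − q(λ*) + δ)/υ, where υ = min_{j} (−g_j(z̄)). -/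
/-- Bounded Multipliers: if the Slater condition holds with Slater vector `z̄`, then any
`λ ⪰ 0` with `q(λ) ≥ q(λ*) - δ` satisfies `‖λ‖₂ ≤ (f(z̄) - q(λ*) + δ)/υ` where
`υ = min_j (-g_j(z̄))`. -/
theorem bounded_multipliers {n m : ℕ} (C : Set (EuclideanSpace ℝ (Fin n)))
    (hCc : IsCompact C) (hCconv : Convex ℝ C) (hCne : C.Nonempty)
    (f : EuclideanSpace ℝ (Fin n) → ℝ)
    (hf : ConvexOn ℝ C f) (hfc : ContinuousOn f C)
    (g : Fin m → EuclideanSpace ℝ (Fin n) → ℝ)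
    (hg : ∀ j, ConvexOn ℝ C (g j)) (hgc : ∀ j, ContinuousOn (g j) C)
    (q : EuclideanSpace ℝ (Fin m) → ℝ)
    (hq : ∀ lam, q lam = sInf ((fun w => f w + ∑ j, lam j * g j w) '' C))
    (lamstar : EuclideanSpace ℝ (Fin m)) (hlamstar0 : ∀ j, 0 ≤ lamstar j)
    (hlamstar : ∀ lam : EuclideanSpace ℝ (Fin m), (∀ j, 0 ≤ lam j) → q lam ≤ q lamstar)
    (zbar : EuclideanSpace ℝ (Fin n)) (hzbar : zbar ∈ C)
    (hslater : ∀ j, g j zbar < 0)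
    (υ : ℝ) (hυ : IsLeast (Set.range fun j => -(g j zbar)) υ)
    (δ : ℝ) (hδ : 0 ≤ δ)
    (lam : EuclideanSpace ℝ (Fin m)) (hlam0 : ∀ j, 0 ≤ lam j)
    (hlamq : q lamstar - δ ≤ q lam) :
    ‖lam‖ ≤ (f zbar - q lamstar + δ) / υ := by
  obtain ⟨j0, hj0⟩ := hυ.1
  simp only at hj0
  have hυpos : 0 < υ := by rw [← hj0]; linarith [hslater j0]
  set S := ∑ j, lam j with hS
  have hS0 : 0 ≤ S := Finset.sum_nonneg fun j _ => hlam0 j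
  have hcont : ContinuousOn (fun w => f w + ∑ j, lam j * g j w) C :=
    hfc.add (continuousOn_finset_sum _ fun j _ => continuousOn_const.mul (hgc j))
  have hbdd : BddBelow ((fun w => f w + ∑ j, lam j * g j w) '' C) :=
    (hCc.image_of_continuousOn hcont).bddBelow
  have hq1 : q lam ≤ f zbar + ∑ j, lam j * g j zbar := by
    rw [hq]; exact csInf_le hbdd ⟨zbar, hzbar, rfl⟩
  have hsum : ∑ j, lam j * g j zbar ≤ -υ * S := by
    have : ∑ j, lam j * g j zbar ≤ ∑ j, lam j * (-υ) := by
      refine Finset.sum_le_sum fun j _ => mul_le_mul_of_nonneg_left ?_ (hlam0 j)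
      have := hυ.2 ⟨j, rfl⟩
      simp only at this
      linarith
    calc ∑ j, lam j * g j zbar ≤ ∑ j, lam j * (-υ) := this
      _ = -υ * S := by rw [hS, Finset.mul_sum]; exact Finset.sum_congr rfl fun j _ => by ring
  have key : υ * S ≤ f zbar - q lamstar + δ := by linarith
  have hnorm : ‖lam‖ ≤ S := by
    rw [EuclideanSpace.norm_eq]
    have h1 : ∑ j, ‖lam j‖ ^ 2 ≤ S ^ 2 := by
      have : ∀ j ∈ Finset.univ, ‖lam j‖ = lam j := fun j _ => Real.norm_of_nonneg (hlam0 j)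
      rw [Finset.sum_congr rfl fun j hj => by rw [this j hj]]
      calc ∑ j, lam j ^ 2 ≤ (∑ j, lam j) ^ 2 := Finset.sum_sq_le_sq_sum_of_nonneg fun j _ => hlam0 j
        _ = S ^ 2 := by rw [hS]
    calc Real.sqrt (∑ j, ‖lam j‖ ^ 2) ≤ Real.sqrt (S ^ 2) := Real.sqrt_le_sqrt h1
      _ = S := Real.sqrt_sq hS0
  calc ‖lam‖ ≤ S := hnorm
    _ ≤ (f zbar - q lamstar + δ) / υ := (le_div_iff₀ hυpos).mpr (by linarith)
end

section
/- Let λ ⪰ 0 in R^m satisfy q(λ) ≥ q(λ*) − δ where q is the dual function of a convex problem satisfying the Slater condition with Slater vector z̄. Then the sum of coordinates satisfies υ·∑_{j=1}^m λ_j ≤ f(z̄) − q(λ*) + δ, where υ = min_j (−g_j(z̄)) > 0. -/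
/-- Under the Slater condition, any `λ ⪰ 0` with `q(λ) ≥ q(λ*) - δ` satisfies
`υ ∑_j λ_j ≤ f(z̄) - q(λ*) + δ` where `υ = min_j (-g_j(z̄)) > 0`. -/
theorem bounded_multiplier_sum {n m : ℕ} (C : Set (EuclideanSpace ℝ (Fin n)))
    (hCc : IsCompact C) (hCconv : Convex ℝ C) (hCne : C.Nonempty)
    (f : EuclideanSpace ℝ (Fin n) → ℝ)
    (hf : ConvexOn ℝ C f) (hfc : ContinuousOn f C)
    (g : Fin m → EuclideanSpace ℝ (Fin n) → ℝ)
    (hg : ∀ j, ConvexOn ℝ C (g j)) (hgc : ∀ j, ContinuousOn (g j) C)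
    (q : EuclideanSpace ℝ (Fin m) → ℝ)
    (hq : ∀ lam, q lam = sInf ((fun w => f w + ∑ j, lam j * g j w) '' C))
    (lamstar : EuclideanSpace ℝ (Fin m)) (hlamstar0 : ∀ j, 0 ≤ lamstar j)
    (hlamstar : ∀ lam : EuclideanSpace ℝ (Fin m), (∀ j, 0 ≤ lam j) → q lam ≤ q lamstar)
    (zbar : EuclideanSpace ℝ (Fin n)) (hzbar : zbar ∈ C)
    (hslater : ∀ j, g j zbar < 0)
    (υ : ℝ) (hυpos : 0 < υ) (hυ : IsLeast (Set.range fun j => -(g j zbar)) υ)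
    (δ : ℝ) (hδ : 0 ≤ δ)
    (lam : EuclideanSpace ℝ (Fin m)) (hlam0 : ∀ j, 0 ≤ lam j)
    (hlamq : q lamstar - δ ≤ q lam) :
    υ * ∑ j, lam j ≤ f zbar - q lamstar + δ := by
  have hcont : ContinuousOn (fun w => f w + ∑ j, lam j * g j w) C := by
    apply hfc.add
    exact continuousOn_finset_sum _ (fun j _ => (hgc j).const_smul (lam j))
  have hbdd : BddBelow ((fun w => f w + ∑ j, lam j * g j w) '' C) :=
    (hCc.image_of_continuousOn hcont).bddBelow
  have hql : q lam ≤ f zbar + ∑ j, lam j * g j zbar := by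
    rw [hq]
    exact csInf_le hbdd ⟨zbar, hzbar, rfl⟩
  have hsum : ∑ j, lam j * g j zbar ≤ ∑ j, lam j * (-υ) := by
    apply Finset.sum_le_sum
    intro j _
    have : υ ≤ -(g j zbar) := hυ.2 ⟨j, rfl⟩
    have hg : g j zbar ≤ -υ := by linarith
    exact mul_le_mul_of_nonneg_left hg (hlam0 j)
  have : ∑ j, lam j * (-υ) = -(υ * ∑ j, lam j) := by
    rw [Finset.mul_sum]
    simp [mul_comm]
  linarith [hlamq, hql, hsum, this ▸ hsum]
end

section
/- Consider the truncated dual update λ_{k+1} = [λ_k + α g(z_{k+1})]^{[0,λ̄]} (coordinatewise projection onto [0, λ̄]^m) with α > 0, λ̄ ≥ max_j λ*_j, λ_1 ∈ [0,λ̄]^m, where {z_k} is a sequence in C with L(z_{k+1}, λ_k) − q(λ_k) ≤ 2ε for all k. Then with z°_k = (1/k)∑_{i=1}^k z_{i+1} and λ°_k = (1/k)∑_{i=1}^k λ_i, we have |L(z°_k, λ°_k) − f*| ≤ 2ε + (α/2)·m·ḡ² + m·λ̄²/(α k), where ḡ = max_{z∈C} ‖g(z)‖_∞ and f* = q(λ*)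 is the optimal value. -/
private lemma clamp_sq_le {t y lb : ℝ} (hy0 : 0 ≤ y) (hyl : y ≤ lb) :
    (min (max t 0) lb - y) ^ 2 ≤ (t - y) ^ 2 := by
  rcases le_total t 0 with h | h
  · rw [max_eq_right h, min_eq_left (hy0.trans hyl)]
    nlinarith
  · rw [max_eq_left h]
    rcases le_total t lb with h2 | h2
    · rw [min_eq_left h2]
    · rw [min_eq_right h2]; nlinarith

private lemma eucl_sum_apply {m : ℕ} (S : Finset ℕ) (lam : ℕ → EuclideanSpace ℝ (Fin m))
    (j : Fin m) : ((∑ i ∈ S, lam i) j) = ∑ i ∈ S, lam i j := by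
  rw [WithLp.ofLp_sum, Finset.sum_apply]

set_option maxHeartbeats 1000000 in
/-- Lagrangian of Averages: with the truncated dual update and a sequence `{z_k}` that
approximately minimises the Lagrangian, the Lagrangian evaluated at the running averages
is within `2ε + (α/2) m ḡ² + m λ̄²/(α k)` of the optimal value `f* = q(λ*)`. -/
theorem lagrangian_of_averages {n m : ℕ} (C : Set (EuclideanSpace ℝ (Fin n)))
    (hCc : IsCompact C) (hCconv : Convex ℝ C) (hCne : C.Nonempty)
    (f : EuclideanSpace ℝ (Fin n) → ℝ)
    (hf : ConvexOn ℝ C f) (hfc : ContinuousOn f C)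
    (g : Fin m → EuclideanSpace ℝ (Fin n) → ℝ)
    (hg : ∀ j, ConvexOn ℝ C (g j)) (hgc : ∀ j, ContinuousOn (g j) C)
    (q : EuclideanSpace ℝ (Fin m) → ℝ)
    (hq : ∀ lam, q lam = sInf ((fun w => f w + ∑ j, lam j * g j w) '' C))
    (lamstar : EuclideanSpace ℝ (Fin m)) (hlamstar0 : ∀ j, 0 ≤ lamstar j)
    (hlamstar : ∀ lam : EuclideanSpace ℝ (Fin m), (∀ j, 0 ≤ lam j) → q lam ≤ q lamstar)
    (ε α lambar gbar : ℝ) (hε : 0 ≤ ε) (hα : 0 < α)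
    (hlambar : ∀ j, lamstar j ≤ lambar)
    (hgbar : ∀ w ∈ C, ∀ j, |g j w| ≤ gbar)
    (z : ℕ → EuclideanSpace ℝ (Fin n)) (hzC : ∀ k, z k ∈ C)
    (lam : ℕ → EuclideanSpace ℝ (Fin m))
    (hlam1 : ∀ j, lam 1 j ∈ Set.Icc (0:ℝ) lambar)
    (hupd : ∀ k ≥ 1, ∀ j,
      lam (k + 1) j = min (max (lam k j + α * g j (z (k + 1))) 0) lambar)
    (hdescent : ∀ k ≥ 1,
      (f (z (k + 1)) + ∑ j, lam k j * g j (z (k + 1))) - q (lam k) ≤ 2 * ε) :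
    ∀ k : ℕ, k ≥ 1 →
      |(f ((k:ℝ)⁻¹ • ∑ i ∈ Finset.Icc 1 k, z (i + 1))
          + ∑ j, ((k:ℝ)⁻¹ • ∑ i ∈ Finset.Icc 1 k, lam i) j
              * g j ((k:ℝ)⁻¹ • ∑ i ∈ Finset.Icc 1 k, z (i + 1)))
        - q lamstar|
      ≤ 2 * ε + α / 2 * m * gbar ^ 2 + m * lambar ^ 2 / (α * k) := by
  -- basic facts about q
  have hLcont : ∀ la : EuclideanSpace ℝ (Fin m),
      ContinuousOn (fun w => f w + ∑ j, la j * g j w) C := by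
    intro la
    exact hfc.add (continuousOn_finset_sum _ fun j _ => continuousOn_const.mul (hgc j))
  have hbdd : ∀ la : EuclideanSpace ℝ (Fin m),
      BddBelow ((fun w => f w + ∑ j, la j * g j w) '' C) := fun la =>
    (hCc.image_of_continuousOn (hLcont la)).bddBelow
  have qle : ∀ la : EuclideanSpace ℝ (Fin m), ∀ w ∈ C,
      q la ≤ f w + ∑ j, la j * g j w := by
    intro la w hw
    rw [hq]
    exact csInf_le (hbdd la) ⟨w, hw, rfl⟩
  have leq : ∀ la : EuclideanSpace ℝ (Fin m), ∀ b : ℝ,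
      (∀ w ∈ C, b ≤ f w + ∑ j, la j * g j w) → b ≤ q la := by
    intro la b hb
    rw [hq]
    exact le_csInf (hCne.image _) (by rintro x ⟨w, hw, rfl⟩; exact hb w hw)
  -- the iterates stay in the box
  have hbox : ∀ i, 1 ≤ i → ∀ j, 0 ≤ lam i j ∧ lam i j ≤ lambar := by
    intro i
    induction i with
    | zero => omega
    | succ i ih =>
      intro _
      rcases Nat.eq_zero_or_pos i with rfl | hpos
      · intro j; exact ⟨(hlam1 j).1, (hlam1 j).2⟩
      · intro j
        have hib := ih hpos
        have hlb : (0:ℝ) ≤ lambar := le_trans (hib j).1 (hib j).2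
        rw [hupd i hpos j]
        exact ⟨le_min (le_max_right _ _) hlb, min_le_right _ _⟩
  -- one-step inequality
  have hstep : ∀ la : EuclideanSpace ℝ (Fin m), (∀ j, 0 ≤ la j ∧ la j ≤ lambar) →
      ∀ i, 1 ≤ i →
      ∑ j, (lam (i+1) j - la j) ^ 2 ≤
        ∑ j, (lam i j - la j) ^ 2
          + 2 * α * ∑ j, g j (z (i+1)) * (lam i j - la j) + α ^ 2 * m * gbar ^ 2 := by
    intro la hla i hi
    have key : ∀ j : Fin m, (lam (i+1) j - la j) ^ 2 ≤
        (lam i j - la j) ^ 2 + 2 * α * (g j (z (i+1)) * (lam i j - la j))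
          + α ^ 2 * gbar ^ 2 := by
      intro j
      rw [hupd i hi j]
      have h1 := clamp_sq_le (t := lam i j + α * g j (z (i+1))) (hla j).1 (hla j).2
      have h2 : (g j (z (i+1))) ^ 2 ≤ gbar ^ 2 := by
        have hb := hgbar (z (i+1)) (hzC (i+1)) j
        nlinarith [abs_nonneg (g j (z (i+1))), sq_abs (g j (z (i+1)))]
      nlinarith [sq_nonneg α]
    calc ∑ j, (lam (i+1) j - la j) ^ 2
        ≤ ∑ j : Fin m, ((lam i j - la j) ^ 2
            + 2 * α * (g j (z (i+1)) * (lam i j - la j)) + α ^ 2 * gbar ^ 2) :=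
          Finset.sum_le_sum fun j _ => key j
      _ = ∑ j, (lam i j - la j) ^ 2
            + 2 * α * ∑ j, g j (z (i+1)) * (lam i j - la j) + α ^ 2 * m * gbar ^ 2 := by
          rw [Finset.sum_add_distrib, Finset.sum_add_distrib, ← Finset.mul_sum,
            Finset.sum_const, Finset.card_univ, Fintype.card_fin, nsmul_eq_mul]
          ring
  -- telescoped inequality
  have htel : ∀ la : EuclideanSpace ℝ (Fin m), (∀ j, 0 ≤ la j ∧ la j ≤ lambar) →
      ∀ K : ℕ,
      2 * α * ∑ i ∈ Finset.Icc 1 K, ∑ j, g j (z (i+1)) * (la j - lam i j) ≤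
        ∑ j, (lam 1 j - la j) ^ 2 - ∑ j, (lam (K+1) j - la j) ^ 2
          + K * (α ^ 2 * m * gbar ^ 2) := by
    intro la hla K
    induction K with
    | zero => simp
    | succ K ih =>
      rw [Finset.sum_Icc_succ_top (by omega : 1 ≤ K + 1)]
      have hD := hstep la hla (K+1) (by omega)
      have hflip : ∑ j, g j (z (K+1+1)) * (la j - lam (K+1) j)
          = -∑ j, g j (z (K+1+1)) * (lam (K+1) j - la j) := by
        rw [← Finset.sum_neg_distrib]
        exact Finset.sum_congr rfl fun j _ => by ring
      push_cast
      rw [hflip] at *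
      push_cast at ih
      linarith
  -- averaged telescoped inequality
  intro k hk
  have hk0 : (0:ℝ) < k := by exact_mod_cast Nat.pos_of_ne_zero (by omega)
  set S : Finset ℕ := Finset.Icc 1 k with hS
  have hcard : S.card = k := by simp [hS]
  set c : ℝ := (k:ℝ)⁻¹ with hc
  have hc0 : 0 ≤ c := by positivity
  have hck : c * k = 1 := inv_mul_cancel₀ hk0.ne'
  have htel2 : ∀ la : EuclideanSpace ℝ (Fin m), (∀ j, 0 ≤ la j ∧ la j ≤ lambar) →
      ∑ i ∈ S, ∑ j, g j (z (i+1)) * (la j - lam i j) ≤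
        m * lambar ^ 2 / (2*α) + k * (α / 2 * m * gbar ^ 2) := by
    intro la hla
    have h1 := htel la hla k
    have hΦ1 : ∑ j, (lam 1 j - la j) ^ 2 ≤ m * lambar ^ 2 := by
      calc ∑ j, (lam 1 j - la j) ^ 2 ≤ ∑ _j : Fin m, lambar ^ 2 :=
            Finset.sum_le_sum fun j _ => by
              have h1j := hlam1 j; have h2j := hla j
              nlinarith [h1j.1, h1j.2, h2j.1, h2j.2]
        _ = m * lambar ^ 2 := by
            rw [Finset.sum_const, Finset.card_univ, Fintype.card_fin, nsmul_eq_mul]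
    have hΦk : 0 ≤ ∑ j, (lam (k+1) j - la j) ^ 2 :=
      Finset.sum_nonneg fun j _ => sq_nonneg _
    have h2α : (0:ℝ) < 2 * α := by linarith
    apply le_of_mul_le_mul_left _ h2α
    have heq : 2 * α * (m * lambar ^ 2 / (2*α) + k * (α / 2 * m * gbar ^ 2))
        = m * lambar ^ 2 + k * (α ^ 2 * m * gbar ^ 2) := by
      field_simp
    rw [heq]
    linarith
  -- averaged primal point and dual point
  set zbar : EuclideanSpace ℝ (Fin n) := c • ∑ i ∈ S, z (i + 1) with hzbar
  set labar : EuclideanSpace ℝ (Fin m) := c • ∑ i ∈ S, lam i with hlabar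
  have hw1 : ∑ _i ∈ S, c = 1 := by
    rw [Finset.sum_const, hcard, nsmul_eq_mul, mul_comm]; exact hck
  have hzbarC : zbar ∈ C := by
    rw [hzbar, Finset.smul_sum]
    exact hCconv.sum_mem (fun i _ => hc0) hw1 (fun i _ => hzC (i+1))
  have hlabarj : ∀ j, labar j = c * ∑ i ∈ S, lam i j := by
    intro j
    rw [hlabar]
    simp [PiLp.smul_apply, smul_eq_mul, eucl_sum_apply]
  have hlabar_box : ∀ j, 0 ≤ labar j ∧ labar j ≤ lambar := by
    intro j
    rw [hlabarj j]
    constructor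
    · exact mul_nonneg hc0 (Finset.sum_nonneg fun i hi =>
        (hbox i (Finset.mem_Icc.mp hi).1 j).1)
    · calc c * ∑ i ∈ S, lam i j ≤ c * ∑ _i ∈ S, lambar := by
            apply mul_le_mul_of_nonneg_left _ hc0
            exact Finset.sum_le_sum fun i hi => (hbox i (Finset.mem_Icc.mp hi).1 j).2
        _ = lambar := by
            rw [Finset.sum_const, hcard, nsmul_eq_mul, ← mul_assoc, hck, one_mul]
  -- Jensen
  have hfJ : f zbar ≤ c * ∑ i ∈ S, f (z (i+1)) := by
    have h := hf.map_sum_le (t := S) (w := fun _ => c) (p := fun i => z (i+1))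
      (fun i _ => hc0) hw1 (fun i _ => hzC (i+1))
    rw [hzbar, Finset.smul_sum]
    calc f (∑ i ∈ S, c • z (i+1)) ≤ ∑ i ∈ S, c • f (z (i+1)) := h
      _ = c * ∑ i ∈ S, f (z (i+1)) := by
          simp [Finset.mul_sum, smul_eq_mul]
  have hgJ : ∀ j, g j zbar ≤ c * ∑ i ∈ S, g j (z (i+1)) := by
    intro j
    have h := (hg j).map_sum_le (t := S) (w := fun _ => c) (p := fun i => z (i+1))
      (fun i _ => hc0) hw1 (fun i _ => hzC (i+1))
    rw [hzbar, Finset.smul_sum]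
    calc g j (∑ i ∈ S, c • z (i+1)) ≤ ∑ i ∈ S, c • g j (z (i+1)) := h
      _ = c * ∑ i ∈ S, g j (z (i+1)) := by
          simp [Finset.mul_sum, smul_eq_mul]
  -- upper bound
  have hub : f zbar + ∑ j, labar j * g j zbar ≤
      q lamstar + 2 * ε + α / 2 * m * gbar ^ 2 + m * lambar ^ 2 / (2 * α * k) := by
    have step1 : f zbar + ∑ j, labar j * g j zbar ≤
        c * ∑ i ∈ S, (f (z (i+1)) + ∑ j, labar j * g j (z (i+1))) := by
      have hterm : ∀ j, labar j * g j zbar ≤ labar j * (c * ∑ i ∈ S, g j (z (i+1))) :=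
        fun j => mul_le_mul_of_nonneg_left (hgJ j) (hlabar_box j).1
      have : ∑ j, labar j * g j zbar ≤ ∑ j, labar j * (c * ∑ i ∈ S, g j (z (i+1))) :=
        Finset.sum_le_sum fun j _ => hterm j
      have hswap : ∑ j, labar j * (c * ∑ i ∈ S, g j (z (i+1)))
          = c * ∑ i ∈ S, ∑ j, labar j * g j (z (i+1)) := by
        simp only [Finset.mul_sum]
        rw [Finset.sum_comm]
        exact Finset.sum_congr rfl fun i _ => Finset.sum_congr rfl fun j _ => by ring
      have hrhs : c * ∑ i ∈ S, (f (z (i+1)) + ∑ j, labar j * g j (z (i+1)))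
          = c * ∑ i ∈ S, f (z (i+1)) + c * ∑ i ∈ S, ∑ j, labar j * g j (z (i+1)) := by
        rw [Finset.sum_add_distrib, mul_add]
      rw [hrhs]
      linarith [this, hswap, hfJ]
    have step2 : ∀ i ∈ S, f (z (i+1)) + ∑ j, labar j * g j (z (i+1)) ≤
        q lamstar + 2 * ε + ∑ j, g j (z (i+1)) * (labar j - lam i j) := by
      intro i hi
      have hi1 : 1 ≤ i := (Finset.mem_Icc.mp hi).1
      have hd := hdescent i hi1
      have hqi : q (lam i) ≤ q lamstar := hlamstar (lam i) (fun j => (hbox i hi1 j).1)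
      have hsplit : ∑ j, labar j * g j (z (i+1)) =
          ∑ j, lam i j * g j (z (i+1)) + ∑ j, g j (z (i+1)) * (labar j - lam i j) := by
        rw [← Finset.sum_add_distrib]
        exact Finset.sum_congr rfl fun j _ => by ring
      linarith
    have step3 : c * ∑ i ∈ S, (f (z (i+1)) + ∑ j, labar j * g j (z (i+1))) ≤
        c * (∑ i ∈ S, (q lamstar + 2 * ε)
          + (m * lambar ^ 2 / (2*α) + k * (α / 2 * m * gbar ^ 2))) := by
      apply mul_le_mul_of_nonneg_left _ hc0
      have h1 : ∑ i ∈ S, (f (z (i+1)) + ∑ j, labar j * g j (z (i+1))) ≤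
          ∑ i ∈ S, (q lamstar + 2 * ε + ∑ j, g j (z (i+1)) * (labar j - lam i j)) :=
        Finset.sum_le_sum step2
      have h2 := htel2 labar hlabar_box
      have h3 : ∑ i ∈ S, (q lamstar + 2 * ε + ∑ j, g j (z (i+1)) * (labar j - lam i j))
          = ∑ i ∈ S, (q lamstar + 2 * ε)
            + ∑ i ∈ S, ∑ j, g j (z (i+1)) * (labar j - lam i j) :=
        Finset.sum_add_distrib
      linarith
    have hfinal : c * (∑ i ∈ S, (q lamstar + 2 * ε)
          + (m * lambar ^ 2 / (2*α) + k * (α / 2 * m * gbar ^ 2)))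
        = q lamstar + 2 * ε + α / 2 * m * gbar ^ 2 + m * lambar ^ 2 / (2 * α * k) := by
      rw [Finset.sum_const, hcard, nsmul_eq_mul, hc]
      field_simp
      ring
    linarith
  -- lower bound
  have hlow : q lamstar - 2 * ε - α / 2 * m * gbar ^ 2 - m * lambar ^ 2 / (2 * α * k) ≤
      f zbar + ∑ j, labar j * g j zbar := by
    have hstar_box : ∀ j, 0 ≤ lamstar j ∧ lamstar j ≤ lambar :=
      fun j => ⟨hlamstar0 j, hlambar j⟩
    have step1 : ∀ i ∈ S,
        q lamstar - 2 * ε - ∑ j, g j (z (i+1)) * (lamstar j - lam i j) ≤ q (lam i) := by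
      intro i hi
      have hi1 : 1 ≤ i := (Finset.mem_Icc.mp hi).1
      have hd := hdescent i hi1
      have hA := qle lamstar (z (i+1)) (hzC (i+1))
      have hsplit : ∑ j, lam i j * g j (z (i+1)) =
          ∑ j, lamstar j * g j (z (i+1)) - ∑ j, g j (z (i+1)) * (lamstar j - lam i j) := by
        rw [← Finset.sum_sub_distrib]
        exact Finset.sum_congr rfl fun j _ => by ring
      linarith
    have step2 : q lamstar - 2 * ε
        - c * (m * lambar ^ 2 / (2*α) + k * (α / 2 * m * gbar ^ 2))
        ≤ c * ∑ i ∈ S, q (lam i) := by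
      have h1 : ∑ i ∈ S, (q lamstar - 2 * ε - ∑ j, g j (z (i+1)) * (lamstar j - lam i j))
          ≤ ∑ i ∈ S, q (lam i) := Finset.sum_le_sum step1
      have h2 := htel2 lamstar hstar_box
      simp only [Finset.sum_sub_distrib, Finset.sum_const, hcard, nsmul_eq_mul] at h1
      have h3 : (k:ℝ) * (q lamstar - 2 * ε)
          - (m * lambar ^ 2 / (2*α) + k * (α / 2 * m * gbar ^ 2))
          ≤ ∑ i ∈ S, q (lam i) := by linarith
      have h4 := mul_le_mul_of_nonneg_left h3 hc0
      calc q lamstar - 2 * ε - c * (m * lambar ^ 2 / (2*α) + k * (α / 2 * m * gbar ^ 2))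
          = c * ((k:ℝ) * (q lamstar - 2 * ε)
            - (m * lambar ^ 2 / (2*α) + k * (α / 2 * m * gbar ^ 2))) := by
            rw [hc]; field_simp
        _ ≤ c * ∑ i ∈ S, q (lam i) := h4
    have step3 : c * ∑ i ∈ S, q (lam i) ≤ q labar := by
      apply leq
      intro w hw
      have heq : f w + ∑ j, labar j * g j w
          = c * ∑ i ∈ S, (f w + ∑ j, lam i j * g j w) := by
        rw [Finset.sum_add_distrib, Finset.sum_const, hcard, nsmul_eq_mul, mul_add,
          ← mul_assoc, hck, one_mul]
        congr 1
        rw [Finset.sum_comm, Finset.mul_sum]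
        exact Finset.sum_congr rfl fun j _ => by
          rw [hlabarj j, Finset.mul_sum, Finset.sum_mul, Finset.mul_sum]
          exact Finset.sum_congr rfl fun i _ => by ring
      rw [heq]
      exact mul_le_mul_of_nonneg_left
        (Finset.sum_le_sum fun i hi => qle (lam i) w hw) hc0
    have step4 : q labar ≤ f zbar + ∑ j, labar j * g j zbar := qle labar zbar hzbarC
    have hcB : c * (m * lambar ^ 2 / (2*α) + k * (α / 2 * m * gbar ^ 2))
        = m * lambar ^ 2 / (2 * α * k) + α / 2 * m * gbar ^ 2 := by
      rw [hc]
      field_simp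
    rw [hcB] at step2
    linarith
  -- conclude
  have hmono : m * lambar ^ 2 / (2 * α * k) ≤ m * lambar ^ 2 / (α * k) := by
    have hnum : (0:ℝ) ≤ (m:ℝ) * lambar ^ 2 := by positivity
    have hden : (0:ℝ) < α * (k:ℝ) := mul_pos hα hk0
    have hden2 : α * (k:ℝ) ≤ 2 * α * (k:ℝ) := by nlinarith
    exact div_le_div_of_nonneg_left hnum hden hden2 |>.trans_eq rfl
  rw [abs_le]
  exact ⟨by linarith, by linarith⟩
end

section
/- Consider two real sequences given by truncated recursions λ_{k+1} = [λ_k + δ_k]^{[0,λ̄]} and λ̃_{k+1} = [λ̃_k + δ̃_k]^{[0,λ̄]} with λ_1 = λ̃_1 ∈ [0,λ̄]. If |∑_{i=1}^k (δ_i − δ̃_i)| ≤ ε for all k ≥ 1, then |λ_k − λ̃_k| ≤ 2ε for all k ≥ 1. -/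
lemma proj_between (L a b : ℝ) :
    min 0 (a - b) ≤ min (max a 0) L - min (max b 0) L ∧
    min (max a 0) L - min (max b 0) L ≤ max 0 (a - b) := by
  constructor <;> · simp only [min_def, max_def]; split_ifs <;> linarith

/-- Two truncated recursions with the same initial value whose increments have uniformly
close partial sums stay within `2ε` of each other. -/
theorem truncated_recursions_close (lambar ε : ℝ) (hlambar : 0 < lambar) (hε : 0 ≤ ε)
    (δ δ' : ℕ → ℝ) (lam lam' : ℕ → ℝ)
    (hinit : lam 1 = lam' 1) (hinitm : lam 1 ∈ Set.Icc 0 lambar)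
    (hupd : ∀ k ≥ 1, lam (k + 1) = min (max (lam k + δ k) 0) lambar)
    (hupd' : ∀ k ≥ 1, lam' (k + 1) = min (max (lam' k + δ' k) 0) lambar)
    (hsum : ∀ k : ℕ, k ≥ 1 → |∑ i ∈ Finset.Icc 1 k, (δ i - δ' i)| ≤ ε) :
    ∀ k ≥ 1, |lam k - lam' k| ≤ 2 * ε := by
  set S : ℕ → ℝ := fun n => ∑ i ∈ Finset.Icc 1 n, (δ i - δ' i) with hS
  have key : ∀ k ≥ 1, |lam k - lam' k - S (k - 1)| ≤ ε := by
    intro k hk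
    induction k, hk using Nat.le_induction with
    | base => simp [hS, hinit, hε]
    | succ k hk ih =>
      have hSk : S k = S (k - 1) + (δ k - δ' k) := by
        obtain ⟨m, rfl⟩ : ∃ m, k = m + 1 := ⟨k - 1, by omega⟩
        simp only [hS, Nat.add_sub_cancel]
        exact Finset.sum_Icc_succ_top (by omega) _
      have hSb : |S k| ≤ ε := hsum k hk
      have h1 := proj_between lambar (lam k + δ k) (lam' k + δ' k)
      rw [← hupd k hk, ← hupd' k hk] at h1
      have hd : (lam k + δ k) - (lam' k + δ' k)
          = (lam k - lam' k - S (k - 1)) + S k := by rw [hSk]; ring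
      rw [hd] at h1
      have hu := abs_le.mp ih
      have hs := abs_le.mp hSb
      simp only [Nat.add_sub_cancel]
      rw [abs_le]
      constructor
      · have := h1.1
        rcases le_total (0 : ℝ) ((lam k - lam' k - S (k - 1)) + S k) with h | h
        · simp [min_eq_left h] at this; linarith
        · simp [min_eq_right h] at this; linarith
      · have := h1.2
        rcases le_total (0 : ℝ) ((lam k - lam' k - S (k - 1)) + S k) with h | h
        · simp [max_eq_right h] at this; linarith
        · simp [max_eq_left h] at this; linarith
  intro k hk
  have hk1 := key k hk
  have hu := abs_le.mp hk1
  have hSb : |S (k - 1)| ≤ ε := by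
    rcases eq_or_lt_of_le hk with h | h
    · simp [← h, hS, hε]
    · exact hsum (k - 1) (by omega)
  have hs := abs_le.mp hSb
  rw [abs_le]
  constructor <;> linarith
end

section
/- Let A ∈ R^{m×n}, let {x_k} be a sequence in a finite set D ⊂ R^n, let z_{k+1} = (1−β)z_k + βx_k with z_1 ∈ C = conv(D), β ∈ (0,1). Consider λ_{k+1} = [λ_k + α(Az_{k+1} − b)]^{[0,λ̄]} and λ̃_{k+1} = [λ̃_k + α(Ax_k − b_k)]^{[0,λ̄]} with λ̃_1 = λ_1, where {b_k} satisfies |∑_{i=1}^k (b_i^{(j)} − b^{(j)})| ≤ σ₂ for all j and k. Then ‖λ̃_k − λ_k‖₂ ≤ 2mα(σ₁/β + σ₂) for all k ≥ 1, where σ₁ = 2·max_{z∈C} ‖Az‖_∞. -/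
private lemma clamp_sub_le (a c L : ℝ) :
    min (max a 0) L - min (max c 0) L ≤ max (a - c) 0 := by
  simp only [min_def, max_def]
  split_ifs <;> linarith

/-- Queues as approximate multipliers: the truncated multiplier sequence driven by
`A z_{k+1} - b` and the queue-like sequence driven by `A x_k - b_k` stay within
`2 m α (σ₁/β + σ₂)` of each other in Euclidean norm. -/
theorem queues_as_approximate_multipliers {n m : ℕ}
    (A : Matrix (Fin m) (Fin n) ℝ)
    (D : Set (Fin n → ℝ)) (hD : D.Finite) (hne : D.Nonempty)
    (x z : ℕ → (Fin n → ℝ)) (hx : ∀ k, x k ∈ D)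
    (hz1 : z 1 ∈ convexHull ℝ D)
    (β : ℝ) (hβ : β ∈ Set.Ioo (0:ℝ) 1)
    (hzupd : ∀ k ≥ 1, z (k + 1) = (1 - β) • z k + β • x k)
    (α lambar : ℝ) (hα : 0 < α) (hlambar : 0 < lambar)
    (b : Fin m → ℝ) (bk : ℕ → Fin m → ℝ)
    (σ1 σ2 : ℝ) (hσ2 : 0 ≤ σ2)
    (hσ1 : ∀ w ∈ convexHull ℝ D, ∀ j, |A.mulVec w j| ≤ σ1 / 2)
    (hb : ∀ j, ∀ k : ℕ, k ≥ 1 → |∑ i ∈ Finset.Icc 1 k, (bk i j - b j)| ≤ σ2)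
    (lam lamt : ℕ → EuclideanSpace ℝ (Fin m))
    (hinit : lamt 1 = lam 1) (hinitm : ∀ j, lam 1 j ∈ Set.Icc (0:ℝ) lambar)
    (hlam : ∀ k ≥ 1, ∀ j,
      lam (k + 1) j = min (max (lam k j + α * (A.mulVec (z (k + 1)) j - b j)) 0) lambar)
    (hlamt : ∀ k ≥ 1, ∀ j,
      lamt (k + 1) j = min (max (lamt k j + α * (A.mulVec (x k) j - bk k j)) 0) lambar) :
    ∀ k ≥ 1, ‖lamt k - lam k‖ ≤ 2 * m * α * (σ1 / β + σ2) := by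
  intro k hk
  rcases Nat.eq_zero_or_pos m with hm | hm
  · subst hm
    simp [EuclideanSpace.norm_eq]
  have hβ0 : (0:ℝ) < β := hβ.1
  have hβ1 : β < 1 := hβ.2
  obtain ⟨w, hw⟩ := hne
  have hσ1nn : 0 ≤ σ1 := by
    have h := hσ1 w (subset_convexHull ℝ D hw) ⟨0, hm⟩
    have h2 := abs_nonneg (A.mulVec w ⟨0, hm⟩)
    linarith
  set M : ℝ := α * (σ1 / β + σ2) with hMdef
  have hM : 0 ≤ M := by
    have h1 : 0 ≤ σ1 / β := div_nonneg hσ1nn (le_of_lt hβ0)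
    have h2 := hα.le
    positivity
  -- z stays in the convex hull
  have zmem : ∀ k, 1 ≤ k → z k ∈ convexHull ℝ D := by
    intro k hk
    induction k with
    | zero => omega
    | succ p ih =>
      rcases Nat.eq_zero_or_pos p with h0 | h0
      · subst h0; exact hz1
      · rw [hzupd p h0]
        exact (convex_convexHull ℝ D) (ih h0) (subset_convexHull ℝ D (hx p))
          (by linarith) (le_of_lt hβ0) (by ring)
  have hσz : ∀ i, 1 ≤ i → ∀ j, |A.mulVec (z i) j| ≤ σ1 / 2 :=
    fun i hi j => hσ1 (z i) (zmem i hi) j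
  -- single step identity
  have hstep : ∀ i, 1 ≤ i → ∀ j, A.mulVec (x i) j - A.mulVec (z (i+1)) j
      = (1 - β)/β * (A.mulVec (z (i+1)) j - A.mulVec (z i) j) := by
    intro i hi j
    have h := congrFun (congrArg A.mulVec (hzupd i hi)) j
    rw [Matrix.mulVec_add, Matrix.mulVec_smul, Matrix.mulVec_smul] at h
    simp only [Pi.add_apply, Pi.smul_apply, smul_eq_mul] at h
    field_simp
    linarith
  -- telescoping sum
  have htel : ∀ j, ∀ k : ℕ, ∑ i ∈ Finset.Icc 1 k, (A.mulVec (x i) j - A.mulVec (z (i+1)) j)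
      = (1 - β)/β * (A.mulVec (z (k+1)) j - A.mulVec (z 1) j) := by
    intro j k
    induction k with
    | zero => simp
    | succ p ih =>
      rw [Finset.sum_Icc_succ_top (by omega : 1 ≤ p + 1), ih, hstep (p+1) (by omega) j]
      ring
  -- cumulative drift bound
  have hSbound : ∀ j, ∀ k : ℕ,
      |∑ i ∈ Finset.Icc 1 k,
        (α * (A.mulVec (x i) j - bk i j) - α * (A.mulVec (z (i+1)) j - b j))| ≤ M := by
    intro j k
    have hrw : ∑ i ∈ Finset.Icc 1 k,
        (α * (A.mulVec (x i) j - bk i j) - α * (A.mulVec (z (i+1)) j - b j))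
        = α * ((∑ i ∈ Finset.Icc 1 k, (A.mulVec (x i) j - A.mulVec (z (i+1)) j))
            - ∑ i ∈ Finset.Icc 1 k, (bk i j - b j)) := by
      rw [mul_sub, Finset.mul_sum, Finset.mul_sum, ← Finset.sum_sub_distrib]
      exact Finset.sum_congr rfl fun i _ => by ring
    rw [hrw, abs_mul, abs_of_pos hα]
    have hT : |∑ i ∈ Finset.Icc 1 k, (A.mulVec (x i) j - A.mulVec (z (i+1)) j)| ≤ σ1 / β := by
      rw [htel j k, abs_mul]
      have h1 : |(1 - β)/β| = (1-β)/β := abs_of_nonneg (div_nonneg (by linarith) hβ0.le)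
      have h2 : |A.mulVec (z (k+1)) j - A.mulVec (z 1) j| ≤ σ1 :=
        (abs_sub _ _).trans (by
          have e1 := hσz (k+1) (by omega) j
          have e2 := hσz 1 le_rfl j
          linarith)
      calc |(1 - β)/β| * |A.mulVec (z (k+1)) j - A.mulVec (z 1) j|
          ≤ ((1-β)/β) * σ1 := by
            rw [h1]
            exact mul_le_mul (le_refl _) h2 (abs_nonneg _) (div_nonneg (by linarith) hβ0.le)
        _ ≤ (1/β) * σ1 := by
            exact mul_le_mul_of_nonneg_right ((div_le_div_iff_of_pos_right hβ0).mpr (by linarith)) hσ1nn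
        _ = σ1 / β := by ring
    have hB : |∑ i ∈ Finset.Icc 1 k, (bk i j - b j)| ≤ σ2 := by
      rcases Nat.eq_zero_or_pos k with h0 | h0
      · subst h0; simpa using hσ2
      · exact hb j k h0
    calc α * |(∑ i ∈ Finset.Icc 1 k, (A.mulVec (x i) j - A.mulVec (z (i+1)) j))
            - ∑ i ∈ Finset.Icc 1 k, (bk i j - b j)|
        ≤ α * (σ1 / β + σ2) := by
          apply mul_le_mul_of_nonneg_left _ hα.le
          exact (abs_sub _ _).trans (by linarith)
      _ = M := hMdef.symm
  -- main invariant
  have key : ∀ j, ∀ p : ℕ,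
      |lamt (p+1) j - lam (p+1) j - ∑ i ∈ Finset.Icc 1 p,
        (α * (A.mulVec (x i) j - bk i j) - α * (A.mulVec (z (i+1)) j - b j))| ≤ M := by
    intro j p
    induction p with
    | zero =>
      rw [hinit]
      simpa using hM
    | succ p ih =>
      have hl := hlam (p+1) (by omega) j
      have hlt := hlamt (p+1) (by omega) j
      have hsum : ∑ i ∈ Finset.Icc 1 (p+1),
          (α * (A.mulVec (x i) j - bk i j) - α * (A.mulVec (z (i+1)) j - b j))
          = (∑ i ∈ Finset.Icc 1 p,
              (α * (A.mulVec (x i) j - bk i j) - α * (A.mulVec (z (i+1)) j - b j)))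
            + (α * (A.mulVec (x (p+1)) j - bk (p+1) j) - α * (A.mulVec (z (p+2)) j - b j)) :=
        Finset.sum_Icc_succ_top (by omega) _
      obtain ⟨ih1, ih2⟩ := abs_le.mp ih
      have hS := abs_le.mp (hSbound j (p+1))
      rw [abs_le]
      constructor
      · -- lower bound: use clamp_sub_le with roles swapped
        have hc := clamp_sub_le (lam (p+1) j + α * (A.mulVec (z (p+2)) j - b j))
          (lamt (p+1) j + α * (A.mulVec (x (p+1)) j - bk (p+1) j)) lambar
        rw [← hl, ← hlt] at hc
        have hmax : max ((lam (p+1) j + α * (A.mulVec (z (p+2)) j - b j))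
            - (lamt (p+1) j + α * (A.mulVec (x (p+1)) j - bk (p+1) j))) 0
            ≤ -(∑ i ∈ Finset.Icc 1 (p+1),
                (α * (A.mulVec (x i) j - bk i j) - α * (A.mulVec (z (i+1)) j - b j))) + M := by
          apply max_le
          · rw [hsum]; linarith
          · linarith [hS.2]
        linarith
      · have hc := clamp_sub_le (lamt (p+1) j + α * (A.mulVec (x (p+1)) j - bk (p+1) j))
          (lam (p+1) j + α * (A.mulVec (z (p+2)) j - b j)) lambar
        rw [← hlt, ← hl] at hc
        have hmax : max ((lamt (p+1) j + α * (A.mulVec (x (p+1)) j - bk (p+1) j))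
            - (lam (p+1) j + α * (A.mulVec (z (p+2)) j - b j))) 0
            ≤ (∑ i ∈ Finset.Icc 1 (p+1),
                (α * (A.mulVec (x i) j - bk i j) - α * (A.mulVec (z (i+1)) j - b j))) + M := by
          apply max_le
          · rw [hsum]; linarith
          · linarith [hS.1]
        linarith
  -- per-coordinate bound
  obtain ⟨p, rfl⟩ : ∃ p, k = p + 1 := ⟨k - 1, by omega⟩
  have hcoord : ∀ j, |lamt (p+1) j - lam (p+1) j| ≤ 2 * M := by
    intro j
    have h1 := key j p
    have h2 := hSbound j p
    have h3 := abs_add_le (lamt (p+1) j - lam (p+1) j - ∑ i ∈ Finset.Icc 1 p,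
        (α * (A.mulVec (x i) j - bk i j) - α * (A.mulVec (z (i+1)) j - b j)))
      (∑ i ∈ Finset.Icc 1 p,
        (α * (A.mulVec (x i) j - bk i j) - α * (A.mulVec (z (i+1)) j - b j)))
    rw [sub_add_cancel] at h3
    linarith
  -- norm bound
  have hnorm : ‖lamt (p+1) - lam (p+1)‖ ≤ Real.sqrt (m * (2*M)^2) := by
    rw [EuclideanSpace.norm_eq]
    apply Real.sqrt_le_sqrt
    calc ∑ j, ‖(lamt (p+1) - lam (p+1)) j‖^2
        ≤ ∑ _j : Fin m, (2*M)^2 := by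
          apply Finset.sum_le_sum
          intro j _
          have hj : ‖(lamt (p+1) - lam (p+1)) j‖ = |lamt (p+1) j - lam (p+1) j| := by
            simp [Real.norm_eq_abs]
          rw [hj]
          exact pow_le_pow_left₀ (abs_nonneg _) (hcoord j) 2
      _ = m * (2*M)^2 := by simp [mul_comm]
  have hsq : Real.sqrt (m * (2*M)^2) = Real.sqrt m * (2*M) := by
    rw [Real.sqrt_mul (Nat.cast_nonneg m), Real.sqrt_sq (by linarith)]
  have hsm : Real.sqrt m ≤ m := by
    have h1 : (m:ℝ) ≤ (m:ℝ)^2 := by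
      have : (1:ℝ) ≤ m := by exact_mod_cast hm
      nlinarith
    calc Real.sqrt m ≤ Real.sqrt ((m:ℝ)^2) := Real.sqrt_le_sqrt h1
      _ = m := Real.sqrt_sq (Nat.cast_nonneg m)
  have hfin : Real.sqrt m * (2*M) ≤ m * (2*M) :=
    mul_le_mul_of_nonneg_right hsm (by linarith)
  rw [hsq] at hnorm
  calc ‖lamt (p+1) - lam (p+1)‖ ≤ Real.sqrt m * (2*M) := hnorm
    _ ≤ m * (2*M) := hfin
    _ = 2 * m * α * (σ1 / β + σ2) := by rw [hMdef]; ring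
end

section
/- Consider the update λ_{k+1} = [λ_k + α g(z_{k+1})]^+ (coordinatewise positive part), where each g_j is convex on C. Then for z°_k = (1/k)∑_{i=1}^k z_{i+1}, the constraint violation satisfies g_j(z°_k) ≤ λ_{k+1}^{(j)}/(αk) for every j; in particular if λ_k^{(j)} ≤ λ̄ for all k, then g_j(z°_k) ≤ λ̄/(αk). -/
/-- Constraint violation bound: with the positive-part dual update,
`g_j(z°_k) ≤ λ_{k+1}^{(j)}/(α k)`; in particular if all multiplier coordinates are
bounded by `λ̄` then `g_j(z°_k) ≤ λ̄/(α k)`. -/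
theorem constraint_violation_bound {n m : ℕ}
    (C : Set (EuclideanSpace ℝ (Fin n))) (hC : Convex ℝ C)
    (g : Fin m → EuclideanSpace ℝ (Fin n) → ℝ)
    (hg : ∀ j, ConvexOn ℝ C (g j))
    (z : ℕ → EuclideanSpace ℝ (Fin n)) (hz : ∀ k, z k ∈ C)
    (α : ℝ) (hα : 0 < α)
    (lam : ℕ → Fin m → ℝ) (hinit : ∀ j, 0 ≤ lam 1 j)
    (hupd : ∀ k ≥ 1, ∀ j, lam (k + 1) j = max (lam k j + α * g j (z (k + 1))) 0)
    (lambar : ℝ) (hlambar : 0 < lambar) :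
    ∀ k : ℕ, k ≥ 1 → ∀ j,
      g j ((k:ℝ)⁻¹ • ∑ i ∈ Finset.Icc 1 k, z (i + 1)) ≤ lam (k + 1) j / (α * k)
      ∧ ((∀ k' ≥ 1, ∀ j', lam k' j' ≤ lambar) →
          g j ((k:ℝ)⁻¹ • ∑ i ∈ Finset.Icc 1 k, z (i + 1)) ≤ lambar / (α * k)) := by
  -- key telescoping bound
  have key : ∀ k : ℕ, k ≥ 1 → ∀ j, α * ∑ i ∈ Finset.Icc 1 k, g j (z (i + 1)) ≤ lam (k + 1) j := by
    intro k hk j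
    induction k with
    | zero => omega
    | succ k ih =>
      rcases Nat.eq_or_lt_of_le hk with h1 | h1
      · simp only [← h1]
        simp only [Finset.Icc_self, Finset.sum_singleton]
        have := hupd 1 le_rfl j
        have h2 : lam 1 j + α * g j (z 2) ≤ lam 2 j := by
          rw [show (1:ℕ)+1 = 2 from rfl] at this; rw [this]; exact le_max_left _ _
        have := hinit j
        norm_num at h2 ⊢
        linarith
      · have hk1 : k ≥ 1 := by omega
        have ih' := ih hk1
        have hu := hupd (k+1) (by omega) j
        have h2 : lam (k+1) j + α * g j (z (k+2)) ≤ lam (k+2) j := by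
          rw [hu]; exact le_max_left _ _
        rw [Finset.sum_Icc_succ_top (by omega : 1 ≤ k + 1)]
        rw [mul_add]
        calc α * ∑ i ∈ Finset.Icc 1 k, g j (z (i+1)) + α * g j (z (k+1+1))
            ≤ lam (k+1) j + α * g j (z (k+2)) := by linarith
          _ ≤ lam (k+2) j := h2
  intro k hk j
  have hkpos : (0:ℝ) < k := by exact_mod_cast hk
  -- Jensen
  have hjensen : g j ((k:ℝ)⁻¹ • ∑ i ∈ Finset.Icc 1 k, z (i + 1))
      ≤ ∑ i ∈ Finset.Icc 1 k, (k:ℝ)⁻¹ * g j (z (i + 1)) := by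
    have hcard : (Finset.Icc 1 k).card = k := by simp
    have := (hg j).map_sum_le (t := Finset.Icc 1 k) (w := fun _ => (k:ℝ)⁻¹)
      (p := fun i => z (i+1)) (fun i _ => by positivity)
      (by simp [hcard, Finset.sum_const]; field_simp) (fun i _ => hz _)
    simpa [Finset.smul_sum] using this
  have hsum : ∑ i ∈ Finset.Icc 1 k, (k:ℝ)⁻¹ * g j (z (i + 1))
      = (k:ℝ)⁻¹ * ∑ i ∈ Finset.Icc 1 k, g j (z (i + 1)) := by
    rw [Finset.mul_sum]
  have hkey := key k hk j
  have h1 : g j ((k:ℝ)⁻¹ • ∑ i ∈ Finset.Icc 1 k, z (i + 1)) ≤ lam (k + 1) j / (α * k) := by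
    rw [hsum] at hjensen
    have : (k:ℝ)⁻¹ * ∑ i ∈ Finset.Icc 1 k, g j (z (i + 1)) ≤ lam (k+1) j / (α * k) := by
      rw [div_eq_mul_inv, mul_inv]
      have h3 : ∑ i ∈ Finset.Icc 1 k, g j (z (i + 1)) ≤ lam (k + 1) j * α⁻¹ := by
        rw [mul_comm, ← le_div_iff₀ hα] at hkey
        rw [div_eq_mul_inv] at hkey; exact hkey
      calc (k:ℝ)⁻¹ * ∑ i ∈ Finset.Icc 1 k, g j (z (i + 1))
          ≤ (k:ℝ)⁻¹ * (lam (k+1) j * α⁻¹) := by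
            apply mul_le_mul_of_nonneg_left h3 (by positivity)
        _ = lam (k+1) j * (α⁻¹ * (k:ℝ)⁻¹) := by ring
    linarith
  refine ⟨h1, fun hb => ?_⟩
  have := hb (k+1) (by omega) j
  calc g j ((k:ℝ)⁻¹ • ∑ i ∈ Finset.Icc 1 k, z (i + 1)) ≤ lam (k+1) j / (α * k) := h1
    _ ≤ lambar / (α * k) := by
        exact div_le_div_of_nonneg_right this (by positivity)
end

section
/- With the positive-part dual update λ_{k+1} = [λ_k + α g(z_{k+1})]^+ where {z_k} ⊂ C, λ_1 ⪰ 0 with ‖λ_1‖₂² ≤ m·λ̄², and ‖g(z)‖₂² ≤ m·ḡ² on C, the averaged complementary slackness is lower bounded: (1/k)∑_{i=1}^k λ_iᵀ g(z_{i+1}) ≥ −m·λ̄²/(2αk) − (α/2)·m·ḡ². -/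
/-- Averaged complementary slackness lower bound: with the positive-part dual update,
`(1/k) ∑_{i=1}^k λ_iᵀ g(z_{i+1}) ≥ - m λ̄²/(2 α k) - (α/2) m ḡ²`. -/
theorem averaged_complementary_slackness_lower_bound {n m : ℕ}
    (C : Set (EuclideanSpace ℝ (Fin n)))
    (g : Fin m → EuclideanSpace ℝ (Fin n) → ℝ)
    (z : ℕ → EuclideanSpace ℝ (Fin n)) (hz : ∀ k, z k ∈ C)
    (α lambar gbar : ℝ) (hα : 0 < α) (hlambar : 0 < lambar) (hgbar : 0 < gbar)
    (lam : ℕ → Fin m → ℝ) (hinit : ∀ j, 0 ≤ lam 1 j)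
    (hlam1 : ∑ j, (lam 1 j) ^ 2 ≤ m * lambar ^ 2)
    (hgb : ∀ w ∈ C, ∑ j, (g j w) ^ 2 ≤ m * gbar ^ 2)
    (hupd : ∀ k ≥ 1, ∀ j, lam (k + 1) j = max (lam k j + α * g j (z (k + 1))) 0) :
    ∀ k : ℕ, k ≥ 1 →
      (k:ℝ)⁻¹ * ∑ i ∈ Finset.Icc 1 k, ∑ j, lam i j * g j (z (i + 1))
        ≥ -(m * lambar ^ 2 / (2 * α * k)) - α / 2 * (m * gbar ^ 2) := by
  intro k hk
  set d : ℕ → ℝ := fun i => ∑ j, lam i j * g j (z (i + 1)) with hd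
  have key : ∀ i, 1 ≤ i → ∑ j, (lam (i + 1) j) ^ 2 ≤
      ∑ j, (lam i j) ^ 2 + (2 * α * d i + α ^ 2 * (m * gbar ^ 2)) := by
    intro i hi
    have h1 : ∀ j : Fin m, (lam (i + 1) j) ^ 2 ≤ (lam i j + α * g j (z (i + 1))) ^ 2 := by
      intro j
      rw [hupd i hi j]
      rcases le_or_gt (lam i j + α * g j (z (i + 1))) 0 with h | h
      · rw [max_eq_right h]; simpa using sq_nonneg _
      · rw [max_eq_left h.le]
    calc ∑ j, (lam (i + 1) j) ^ 2
        ≤ ∑ j, (lam i j + α * g j (z (i + 1))) ^ 2 :=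
          Finset.sum_le_sum fun j _ => h1 j
      _ = ∑ j, (lam i j) ^ 2 + 2 * α * d i + α ^ 2 * ∑ j, (g j (z (i + 1))) ^ 2 := by
          simp only [hd, Finset.mul_sum, ← Finset.sum_add_distrib]
          exact Finset.sum_congr rfl fun j _ => by ring
      _ ≤ ∑ j, (lam i j) ^ 2 + (2 * α * d i + α ^ 2 * (m * gbar ^ 2)) := by
          have := hgb (z (i + 1)) (hz (i + 1))
          nlinarith [sq_nonneg α]
  have tel : ∀ K, 1 ≤ K → ∑ j, (lam (K + 1) j) ^ 2 ≤
      ∑ j, (lam 1 j) ^ 2 + ∑ i ∈ Finset.Icc 1 K, (2 * α * d i + α ^ 2 * (m * gbar ^ 2)) := by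
    intro K hK
    induction K, hK using Nat.le_induction with
    | base => simpa using key 1 le_rfl
    | succ K hK ih =>
        rw [Finset.sum_Icc_succ_top (by omega)]
        have := key (K + 1) (by omega)
        linarith
  have hsplit : ∑ i ∈ Finset.Icc 1 k, (2 * α * d i + α ^ 2 * (m * gbar ^ 2)) =
      2 * α * ∑ i ∈ Finset.Icc 1 k, d i + (k : ℝ) * (α ^ 2 * (m * gbar ^ 2)) := by
    rw [Finset.sum_add_distrib, Finset.sum_const, ← Finset.mul_sum]
    simp [Nat.card_Icc]
  have hpos : (0 : ℝ) ≤ ∑ j, (lam (k + 1) j) ^ 2 :=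
    Finset.sum_nonneg fun j _ => sq_nonneg _
  have hT : -(m * lambar ^ 2) - (k : ℝ) * (α ^ 2 * (m * gbar ^ 2)) ≤
      2 * α * ∑ i ∈ Finset.Icc 1 k, d i := by
    have := tel k hk
    rw [hsplit] at this
    linarith
  have hk0 : (0 : ℝ) < k := by exact_mod_cast Nat.pos_of_ne_zero (by omega)
  rw [ge_iff_le, ← sub_nonneg]
  have e : (k : ℝ)⁻¹ * ∑ i ∈ Finset.Icc 1 k, d i -
      (-(m * lambar ^ 2 / (2 * α * k)) - α / 2 * (m * gbar ^ 2)) =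
      (2 * α * (∑ i ∈ Finset.Icc 1 k, d i) -
        (-(m * lambar ^ 2) - (k : ℝ) * (α ^ 2 * (m * gbar ^ 2)))) / (2 * α * k) := by
    field_simp
  rw [e]
  exact div_nonneg (by linarith) (by positivity)
end

section
/- Let F : R^n → R be convex with bounded curvature constant μ_F on C = conv(D), D finite, and let x̄_D = 2 max_{x∈D}‖x‖₂. If z ∈ C and x* ∈ argmin_{x∈D} F((1−β)z + βx) for β ∈ (0,1), then F((1−β)z + βx*) ≤ min_{y∈C} F(y) + ν + β²μ_F x̄_D², where ν = F(z) − min_{y∈C} F(y). -/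
/-- If `x*` minimises `F((1-β)z + βx)` over the finite action set `D`, then
`F((1-β)z + βx*) ≤ min_{y∈C} F(y) + ν + β² μ_F x̄_D²` where `ν = F(z) - min_{y∈C} F(y)`
and `x̄_D = 2 max_{x∈D} ‖x‖`. -/
theorem greedy_step_near_optimal {n : ℕ} (D : Set (EuclideanSpace ℝ (Fin n)))
    (hD : D.Finite) (hne : D.Nonempty)
    (F : EuclideanSpace ℝ (Fin n) → ℝ)
    (hF : ConvexOn ℝ Set.univ F)
    (sg : EuclideanSpace ℝ (Fin n) → EuclideanSpace ℝ (Fin n))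
    (hsg : ∀ w ∈ convexHull ℝ D, ∀ v, F w + ∑ j, sg w j * (v - w) j ≤ F v)
    (μF : ℝ) (hμF : 0 ≤ μF)
    (hcurv : ∀ w δ, w ∈ convexHull ℝ D → w + δ ∈ convexHull ℝ D →
      F (w + δ) - F w ≤ (∑ j, sg w j * δ j) + μF * ‖δ‖ ^ 2)
    (M : ℝ) (hM : IsGreatest ((fun x => ‖x‖) '' D) M)
    (β : ℝ) (hβ : β ∈ Set.Ioo (0:ℝ) 1)
    (z : EuclideanSpace ℝ (Fin n)) (hz : z ∈ convexHull ℝ D)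
    (xstar : EuclideanSpace ℝ (Fin n)) (hxstarD : xstar ∈ D)
    (hxstar : ∀ x ∈ D, F ((1 - β) • z + β • xstar) ≤ F ((1 - β) • z + β • x))
    (Fmin : ℝ) (hFmin : IsLeast (F '' convexHull ℝ D) Fmin) :
    F ((1 - β) • z + β • xstar) ≤ Fmin + (F z - Fmin) + β ^ 2 * μF * (2 * M) ^ 2 := by
  obtain ⟨hβ0, hβ1⟩ := hβ
  -- norm bounds
  have hMnn : 0 ≤ M := by
    obtain ⟨x, hx, hxM⟩ := hM.1
    exact hxM ▸ norm_nonneg x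
  have hDball : D ⊆ Metric.closedBall (0 : EuclideanSpace ℝ (Fin n)) M := by
    intro x hx
    rw [Metric.mem_closedBall, dist_zero_right]
    exact hM.2 ⟨x, hx, rfl⟩
  have hhullball : convexHull ℝ D ⊆ Metric.closedBall (0 : EuclideanSpace ℝ (Fin n)) M :=
    convexHull_min hDball (convex_closedBall 0 M)
  have hznorm : ‖z‖ ≤ M := by
    have := hhullball hz
    rwa [Metric.mem_closedBall, dist_zero_right] at this
  -- linear functional
  set L : EuclideanSpace ℝ (Fin n) → ℝ := fun v => ∑ j, sg z j * v j with hL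
  have hLlin : IsLinearMap ℝ L := by
    constructor
    · intro a b
      simp [hL, PiLp.add_apply, mul_add, Finset.sum_add_distrib]
    · intro c a
      simp [hL, PiLp.smul_apply, smul_eq_mul, Finset.mul_sum]
      congr 1; ext j; ring
  -- minimiser of L over D
  obtain ⟨x₀, hx₀D, hx₀min⟩ := hD.toFinset.exists_min_image L
    (by simpa [Set.Finite.toFinset_nonempty] using hne)
  rw [Set.Finite.mem_toFinset] at hx₀D
  -- y* achieving Fmin
  obtain ⟨ystar, hystar, hFystar⟩ := hFmin.1
  have hLx₀ : L x₀ ≤ L ystar := by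
    have hsub : convexHull ℝ D ⊆ {w | L x₀ ≤ L w} := by
      apply convexHull_min
      · intro x hx
        exact hx₀min x (hD.mem_toFinset.2 hx)
      · exact convex_halfSpace_ge hLlin (L x₀)
    exact hsub hystar
  -- subgradient at z applied to y*
  have hsgy : L ystar - L z ≤ Fmin - F z := by
    have := hsg z hz ystar
    have hsum : (∑ j, sg z j * (ystar - z) j) = L ystar - L z := by
      simp [hL, PiLp.sub_apply, mul_sub, Finset.sum_sub_distrib]
    rw [hsum] at this
    linarith [hFystar ▸ this]
  -- curvature at z with δ = β•(x₀ - z)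
  have hmem : (1 - β) • z + β • x₀ ∈ convexHull ℝ D :=
    convex_convexHull ℝ D hz (subset_convexHull ℝ D hx₀D) (by linarith) hβ0.le (by ring)
  have heq : z + β • (x₀ - z) = (1 - β) • z + β • x₀ := by
    rw [smul_sub, sub_smul, one_smul]; abel
  have hcurv' := hcurv z (β • (x₀ - z)) hz (heq ▸ hmem)
  rw [heq] at hcurv'
  have hsumδ : (∑ j, sg z j * (β • (x₀ - z)) j) = β * (L x₀ - L z) := by
    simp only [hL, PiLp.smul_apply, PiLp.sub_apply, smul_eq_mul]
    rw [mul_sub, Finset.mul_sum, Finset.mul_sum, ← Finset.sum_sub_distrib]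
    exact Finset.sum_congr rfl fun j _ => by ring
  have hnormδ : ‖β • (x₀ - z)‖ ^ 2 ≤ β ^ 2 * (2 * M) ^ 2 := by
    have h1 : ‖x₀ - z‖ ≤ 2 * M := by
      have := hM.2 ⟨x₀, hx₀D, rfl⟩
      calc ‖x₀ - z‖ ≤ ‖x₀‖ + ‖z‖ := norm_sub_le _ _
        _ ≤ 2 * M := by linarith
    have h2 : ‖β • (x₀ - z)‖ = β * ‖x₀ - z‖ := by
      rw [norm_smul, Real.norm_eq_abs, abs_of_pos hβ0]
    rw [h2, mul_pow]
    have : ‖x₀ - z‖ ^ 2 ≤ (2 * M) ^ 2 :=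
      pow_le_pow_left₀ (norm_nonneg _) h1 2
    nlinarith [sq_nonneg β]
  have hFz : Fmin ≤ F z := hFmin.2 ⟨z, hz, rfl⟩
  have key : F ((1 - β) • z + β • x₀) ≤ F z + β * (Fmin - F z) + μF * (β ^ 2 * (2 * M) ^ 2) := by
    have h3 : β * (L x₀ - L z) ≤ β * (Fmin - F z) := by
      have : L x₀ - L z ≤ Fmin - F z := by linarith
      exact mul_le_mul_of_nonneg_left this hβ0.le
    have h4 : μF * ‖β • (x₀ - z)‖ ^ 2 ≤ μF * (β ^ 2 * (2 * M) ^ 2) :=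
      mul_le_mul_of_nonneg_left hnormδ hμF
    rw [hsumδ] at hcurv'
    linarith
  have hfinal : F ((1 - β) • z + β • xstar) ≤ F ((1 - β) • z + β • x₀) := hxstar x₀ hx₀D
  have hβF : β * (Fmin - F z) ≤ 0 := mul_nonpos_of_nonneg_of_nonpos hβ0.le (by linarith)
  linarith
end
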